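/- Let (D;f,g) be a 1-defect chain with defect {b,c}. A function h : D^k → ℤ (k ≥ 2) has the multimorphism (f,g), i.e., h(f(x,y)) + h(g(x,y)) ≤ h(x) + h(y) for all x,y ∈ D^k (f,g applied componentwise), if and only if every binary function obtained from h by fixing any k−2 of its arguments to constants has the multimorphism (f,g). -/

import Mathlib

set_option linter.unusedSectionVars false
set_option maxHeartbeats 1000000

section Aux
variable {D : Type*} [DecidableEq D] [PartialOrder D]
variable {k : ℕ}

private def dfc (x y : Fin k → D) : ℕ :=
  (Finset.univ.filter fun i => x i ≠ y i).card

private def dfd (b c : D) (x y : Fin k → D) : ℕ :=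
  (Finset.univ.filter fun i => (x i = b ∧ y i = c) ∨ (x i = c ∧ y i = b)).card

private lemma dfc_symm (x y : Fin k → D) : dfc x y = dfc y x := by
  unfold dfc; congr 1
  apply Finset.filter_congr
  intro i _; simp [ne_comm]

private lemma dfd_symm (b c : D) (x y : Fin k → D) : dfd b c x y = dfd b c y x := by
  unfold dfd; congr 1
  apply Finset.filter_congr
  intro i _
  constructor <;> (rintro (⟨h1,h2⟩|⟨h1,h2⟩)) <;> simp [h1, h2]

private lemma card_lt_of (s t : Finset (Fin k)) (j : Fin k) (hsub : s ⊆ t)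
    (hjt : j ∈ t) (hjs : j ∉ s) : s.card < t.card :=
  Finset.card_lt_card (((Finset.ssubset_iff_of_subset hsub)).mpr ⟨j, hjt, hjs⟩)

private lemma dfc_le_k (x y : Fin k → D) : dfc x y ≤ k := by
  unfold dfc
  calc (Finset.univ.filter fun i => x i ≠ y i).card ≤ (Finset.univ : Finset (Fin k)).card :=
        Finset.card_filter_le _ _
    _ = k := by simp

/-- exchange chain lemma -/
private lemma ex2core (f g : D → D → D) (h : (Fin k → D) → ℤ)
    (hfcomm : ∀ x y, f x y = f y x) (hgcomm : ∀ x y, g x y = g y x)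
    (hfmeet : ∀ x y, x ≤ y → f x y = x) (hgjoin : ∀ x y, x ≤ y → g x y = y)
    (HB : ∀ (i j : Fin k), i ≠ j → ∀ (z : Fin k → D) (s t s' t' : D),
      h (fun m => if m = i then f s s' else if m = j then f t t' else z m)
      + h (fun m => if m = i then g s s' else if m = j then g t t' else z m)
      ≤ h (fun m => if m = i then s else if m = j then t else z m)
      + h (fun m => if m = i then s' else if m = j then t' else z m)) :
    ∀ (n : ℕ) (w w' : Fin k → D) (l : Fin k) (p : D),
      (∀ m, w' m ≤ w m) → w' l = w l → p ≤ w l → dfc w w' ≤ n →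
      h w + h (fun m => if m = l then p else w' m)
        ≤ h (fun m => if m = l then p else w m) + h w' := by
  intro n
  induction n with
  | zero =>
    intro w w' l p hle hl hp hd
    have hww : w = w' := by
      funext m
      by_contra hm
      have : m ∈ Finset.univ.filter fun i => w i ≠ w' i := by simp [hm]
      have : 0 < dfc w w' := Finset.card_pos.mpr ⟨m, this⟩
      omega
    subst hww
    linarith
  | succ n IHn =>
    intro w w' l p hle hl hp hd
    by_cases hww : w = w'
    · subst hww; linarith
    · have hex : ∃ m, w m ≠ w' m := by
        by_contra hcon
        push_neg at hcon
        exact hww (funext hcon)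
      obtain ⟨m0, hm0⟩ := hex
      have hm0l : m0 ≠ l := by
        intro e; subst e; exact hm0 hl.symm
      have hlm0 : l ≠ m0 := Ne.symm hm0l
      -- binary instance
      have HBi := HB l m0 hlm0 w' (w l) (w' m0) p (w m0)
      have ef1 : f (w l) p = p := by rw [hfcomm]; exact hfmeet p (w l) hp
      have ef2 : f (w' m0) (w m0) = w' m0 := hfmeet _ _ (hle m0)
      have eg1 : g (w l) p = w l := by rw [hgcomm]; exact hgjoin p (w l) hp
      have eg2 : g (w' m0) (w m0) = w m0 := hgjoin _ _ (hle m0)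
      rw [ef1, ef2, eg1, eg2] at HBi
      -- identify points
      have e1 : (fun m => if m = l then p else if m = m0 then w' m0 else w' m)
          = (fun m => if m = l then p else w' m) := by
        funext m
        by_cases h1 : m = l
        · simp [h1]
        · by_cases h2 : m = m0 <;> simp [h1, h2]
      have e2 : (fun m => if m = l then w l else if m = m0 then w m0 else w' m)
          = (fun m => if m = m0 then w m0 else w' m) := by
        funext m
        by_cases h1 : m = l
        · subst h1; simp [hm0l, hl, hlm0]
        · simp [h1]
      have e3 : (fun m => if m = l then w l else if m = m0 then w' m0 else w' m)
          = w' := by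
        funext m
        by_cases h1 : m = l
        · subst h1; simp [hl]
        · by_cases h2 : m = m0 <;> simp [h1, h2, hm0l, hlm0]
      have e4 : (fun m => if m = l then p else if m = m0 then w m0 else w' m)
          = (fun m => if m = l then p else (fun m' => if m' = m0 then w m0 else w' m') m) := by
        funext m; by_cases h1 : m = l <;> simp [h1]
      rw [e1, e2, e3, e4] at HBi
      -- IH on (w, w'')
      have hw''le : ∀ m, (fun m' => if m' = m0 then w m0 else w' m') m ≤ w m := by
        intro m
        by_cases h2 : m = m0
        · subst h2; simp
        · simp only [if_neg h2]; exact hle m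
      have hw''l : (fun m' => if m' = m0 then w m0 else w' m') l = w l := by
        simp [hm0l.symm, hl]
      have hdfc' : dfc w (fun m' => if m' = m0 then w m0 else w' m') ≤ n := by
        have hlt : dfc w (fun m' => if m' = m0 then w m0 else w' m') < dfc w w' := by
          apply card_lt_of _ _ m0
          · intro i hi
            simp only [Finset.mem_filter, Finset.mem_univ, true_and] at hi ⊢
            by_cases h2 : i = m0
            · subst h2; simp at hi
            · simpa [h2] using hi
          · simp [hm0]
          · simp
        omega
      have IHi := IHn w (fun m' => if m' = m0 then w m0 else w' m') l p hw''le hw''l hp hdfc'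
      linarith
end Aux



private lemma backward {D : Type*} [DecidableEq D] [PartialOrder D]
    (b c : D) (hbc : b ≠ c) (hbc1 : ¬ b ≤ c) (hbc2 : ¬ c ≤ b)
    (hcomp : ∀ x y : D, ¬ ((x = b ∧ y = c) ∨ (x = c ∧ y = b)) → x ≤ y ∨ y ≤ x)
    (f g : D → D → D)
    (hfcomm : ∀ x y, f x y = f y x) (hgcomm : ∀ x y, g x y = g y x)
    (hfmeet : ∀ x y, x ≤ y → f x y = x) (hgjoin : ∀ x y, x ≤ y → g x y = y)
    (hfdef : f b c ∉ ({b, c} : Set D)) (hgdef : g b c ∉ ({b, c} : Set D))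
    (hfg : f b c < g b c)
    {k : ℕ} (hk : 2 ≤ k) (h : (Fin k → D) → ℤ)
    (HB : ∀ (i j : Fin k), i ≠ j → ∀ (z : Fin k → D) (s t s' t' : D),
      h (fun m => if m = i then f s s' else if m = j then f t t' else z m)
      + h (fun m => if m = i then g s s' else if m = j then g t t' else z m)
      ≤ h (fun m => if m = i then s else if m = j then t else z m)
      + h (fun m => if m = i then s' else if m = j then t' else z m)) :
    ∀ x y : Fin k → D,
      h (fun i => f (x i) (y i)) + h (fun i => g (x i) (y i)) ≤ h x + h y := by
  -- basic facts
  have fxx : ∀ a : D, f a a = a := fun a => hfmeet a a le_rfl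
  have gxx : ∀ a : D, g a a = a := fun a => hgjoin a a le_rfl
  have fge : ∀ a a' : D, a' ≤ a → f a a' = a' := fun a a' hle => by
    rw [hfcomm]; exact hfmeet a' a hle
  have gge : ∀ a a' : D, a' ≤ a → g a a' = a := fun a a' hle => by
    rw [hgcomm]; exact hgjoin a' a hle
  have hfcb : f c b = f b c := hfcomm c b
  have hgcb : g c b = g b c := hgcomm c b
  have hfdef' : f b c ≠ b ∧ f b c ≠ c := by
    simp only [Set.mem_insert_iff, Set.mem_singleton_iff] at hfdef
    push_neg at hfdef; exact hfdef
  have hgdef' : g b c ≠ b ∧ g b c ≠ c := by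
    simp only [Set.mem_insert_iff, Set.mem_singleton_iff] at hgdef
    push_neg at hgdef; exact hgdef
  obtain ⟨hβb, hβc⟩ := hfdef'
  obtain ⟨hγb, hγc⟩ := hgdef'
  have hβpos : (f b c ≤ b ∧ f b c ≤ c) ∨ (b ≤ f b c ∧ c ≤ f b c) := by
    have hnd1 : ¬ ((f b c = b ∧ b = c) ∨ (f b c = c ∧ b = b)) := by
      rintro (⟨e1, e2⟩ | ⟨e1, e2⟩)
      · exact hbc e2
      · exact hβc e1
    have hnd2 : ¬ ((f b c = b ∧ c = c) ∨ (f b c = c ∧ c = b)) := by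
      rintro (⟨e1, e2⟩ | ⟨e1, e2⟩)
      · exact hβb e1
      · exact hβc e1
    rcases hcomp (f b c) b hnd1 with h1 | h1
    · left
      refine ⟨h1, ?_⟩
      rcases hcomp (f b c) c hnd2 with h2 | h2
      · exact h2
      · exact absurd (le_trans h2 h1) hbc2
    · right
      refine ⟨h1, ?_⟩
      rcases hcomp (f b c) c hnd2 with h2 | h2
      · exact absurd (le_trans h1 h2) hbc1
      · exact h2
  have hγpos : (g b c ≤ b ∧ g b c ≤ c) ∨ (b ≤ g b c ∧ c ≤ g b c) := by
    have hnd1 : ¬ ((g b c = b ∧ b = c) ∨ (g b c = c ∧ b = b)) := by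
      rintro (⟨e1, e2⟩ | ⟨e1, e2⟩)
      · exact hbc e2
      · exact hγc e1
    have hnd2 : ¬ ((g b c = b ∧ c = c) ∨ (g b c = c ∧ c = b)) := by
      rintro (⟨e1, e2⟩ | ⟨e1, e2⟩)
      · exact hγb e1
      · exact hγc e1
    rcases hcomp (g b c) b hnd1 with h1 | h1
    · left
      refine ⟨h1, ?_⟩
      rcases hcomp (g b c) c hnd2 with h2 | h2
      · exact h2
      · exact absurd (le_trans h2 h1) hbc2
    · right
      refine ⟨h1, ?_⟩
      rcases hcomp (g b c) c hnd2 with h2 | h2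
      · exact absurd (le_trans h1 h2) hbc1
      · exact h2
  have hk0 : 0 < k := by omega
  have hk1 : 1 < k := by omega
  have exists_ne : ∀ l : Fin k, ∃ j : Fin k, j ≠ l := by
    intro l
    by_cases h0 : l = ⟨0, hk0⟩
    · exact ⟨⟨1, hk1⟩, by simp [h0, Fin.ext_iff]⟩
    · exact ⟨⟨0, hk0⟩, fun hh => h0 hh.symm⟩
  have swap : ∀ x' y' : Fin k → D,
      h (fun i => f (y' i) (x' i)) + h (fun i => g (y' i) (x' i)) ≤ h y' + h x' →
      h (fun i => f (x' i) (y' i)) + h (fun i => g (x' i) (y' i)) ≤ h x' + h y' := by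
    intro x' y' hh
    have e1 : (fun i => f (x' i) (y' i)) = fun i => f (y' i) (x' i) :=
      funext fun i => hfcomm _ _
    have e2 : (fun i => g (x' i) (y' i)) = fun i => g (y' i) (x' i) :=
      funext fun i => hgcomm _ _
    rw [e1, e2]; linarith only [hh]
  have classify : ∀ x y : Fin k → D, ∀ m : Fin k,
      x m = y m ∨ x m ≤ y m ∨ y m ≤ x m ∨ ((x m = b ∧ y m = c) ∨ (x m = c ∧ y m = b)) := by
    intro x y m
    by_cases he : x m = y m
    · exact Or.inl he
    · by_cases hc1 : x m ≤ y m
      · exact Or.inr (Or.inl hc1)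
      · by_cases hc2 : y m ≤ x m
        · exact Or.inr (Or.inr (Or.inl hc2))
        · refine Or.inr (Or.inr (Or.inr ?_))
          by_contra hcon
          rcases hcomp (x m) (y m) hcon with hh | hh
          · exact hc1 hh
          · exact hc2 hh
  -- main induction
  suffices key : ∀ (N : ℕ) (x y : Fin k → D),
      (k+1) * dfd b c x y + dfc x y ≤ N →
      h (fun i => f (x i) (y i)) + h (fun i => g (x i) (y i)) ≤ h x + h y by
    intro x y
    exact key ((k+1) * dfd b c x y + dfc x y) x y le_rfl
  have trivcase : ∀ x y : Fin k → D, (∀ i, x i = y i) →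
      h (fun i => f (x i) (y i)) + h (fun i => g (x i) (y i)) ≤ h x + h y := by
    intro x y hxy
    have e1 : (fun i => f (x i) (y i)) = x := funext fun i => by rw [← hxy i, fxx]
    have e2 : (fun i => g (x i) (y i)) = y := funext fun i => by rw [hxy i, gxx]
    rw [e1, e2]
  intro N
  induction N with
  | zero =>
    intro x y hμ
    apply trivcase
    intro i
    by_contra hne
    have : i ∈ Finset.univ.filter fun i => x i ≠ y i := by simp [hne]
    have : 0 < dfc x y := Finset.card_pos.mpr ⟨i, this⟩
    omega
  | succ N IH =>
    -- Route for a comparable differing coordinate l (with x l < y l).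
    have route12 : ∀ (x y : Fin k → D) (l : Fin k), x l ≤ y l → x l ≠ y l →
        (k+1) * dfd b c x y + dfc x y ≤ N + 1 →
        h (fun i => f (x i) (y i)) + h (fun i => g (x i) (y i)) ≤ h x + h y := by
      intro x y l hle hne hμ
      -- the defect-pair predicate is false at l, before and after the update
      have hnd_old : ¬ ((x l = b ∧ y l = c) ∨ (x l = c ∧ y l = b)) := by
        rintro (⟨e1, e2⟩ | ⟨e1, e2⟩)
        · exact hbc1 (by rw [← e1, ← e2]; exact hle)
        · exact hbc2 (by rw [← e1, ← e2]; exact hle)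
      rcases hβpos with hββ | hββ
      · -- route 1 : replace x l by y l
        have hdfd1 : dfd b c (fun m => if m = l then y l else x m) y = dfd b c x y := by
          unfold dfd; congr 1
          apply Finset.filter_congr
          intro i _
          by_cases hi : i = l
          · subst hi
            simp only [if_pos rfl]
            constructor
            · rintro (⟨e1, e2⟩ | ⟨e1, e2⟩)
              · exact absurd (e1.symm.trans e2) hbc
              · exact absurd (e2.symm.trans e1) hbc
            · intro hcon; exact absurd hcon hnd_old
          · simp [hi]
        have hdfc1 : dfc (fun m => if m = l then y l else x m) y < dfc x y := by
          apply card_lt_of _ _ l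
          · intro i hi
            simp only [dfc, Finset.mem_filter, Finset.mem_univ, true_and] at hi ⊢
            by_cases h2 : i = l
            · subst h2; simp at hi
            · simpa [h2] using hi
          · simp only [Finset.mem_filter, Finset.mem_univ, true_and]; exact hne
          · simp
        have hμ1 : (k+1) * dfd b c (fun m => if m = l then y l else x m) y
            + dfc (fun m => if m = l then y l else x m) y ≤ N := by
          rw [hdfd1]
          have h1 := dfc_le_k (fun m => if m = l then y l else x m) y
          linarith only [hμ, hdfc1, h1]
        have IH1 := IH (fun m => if m = l then y l else x m) y hμ1
        have e11 : (fun i => f (if i = l then y l else x i) (y i))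
            = (fun i => if i = l then y l else f (x i) (y i)) := by
          funext i
          by_cases hi : i = l
          · subst hi; simp [fxx]
          · simp [hi]
        have e12 : (fun i => g (if i = l then y l else x i) (y i))
            = (fun i => g (x i) (y i)) := by
          funext i
          by_cases hi : i = l
          · subst hi; simp [gxx, hgjoin _ _ hle]
          · simp [hi]
        rw [e11, e12] at IH1
        -- exchange chain
        have hwle : ∀ m, (fun i => if i = l then y l else f (x i) (y i)) m
            ≤ (fun m => if m = l then y l else x m) m := by
          intro m
          by_cases hm : m = l
          · simp [hm]
          · simp only [if_neg hm]
            rcases classify x y m with he | hc1 | hc2 | ⟨⟨e1, e2⟩ | ⟨e1, e2⟩⟩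
            · rw [← he, fxx]
            · rw [hfmeet _ _ hc1]
            · rw [fge _ _ hc2]; exact hc2
            · rw [e1, e2]; exact hββ.1
            · rw [e1, e2, hfcb]; exact hββ.2
        have hw'l : (fun i => if i = l then y l else f (x i) (y i)) l
            = (fun m => if m = l then y l else x m) l := by simp
        have hpl : x l ≤ (fun m => if m = l then y l else x m) l := by simp [hle]
        have EXi := ex2core f g h hfcomm hgcomm hfmeet hgjoin HB
          (dfc (fun m => if m = l then y l else x m) (fun i => if i = l then y l else f (x i) (y i)))
          (fun m => if m = l then y l else x m) (fun i => if i = l then y l else f (x i) (y i))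
          l (x l) hwle hw'l hpl le_rfl
        have e13 : (fun m => if m = l then x l else if m = l then y l else f (x m) (y m))
            = (fun i => f (x i) (y i)) := by
          funext m
          by_cases hm : m = l
          · subst hm; simp [hfmeet _ _ hle]
          · simp [hm]
        have e14 : (fun m => if m = l then x l else if m = l then y l else x m) = x := by
          funext m
          by_cases hm : m = l
          · subst hm; simp
          · simp [hm]
        rw [e13, e14] at EXi
        linarith only [IH1, EXi]
      · -- route 2 : replace y l by x l
        have hγab : b ≤ g b c := le_trans hββ.1 (le_of_lt hfg)
        have hγac : c ≤ g b c := le_trans hββ.2 (le_of_lt hfg)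
        have hdfd2 : dfd b c x (fun m => if m = l then x l else y m) = dfd b c x y := by
          unfold dfd; congr 1
          apply Finset.filter_congr
          intro i _
          by_cases hi : i = l
          · subst hi
            simp only [if_pos rfl]
            constructor
            · rintro (⟨e1, e2⟩ | ⟨e1, e2⟩)
              · exact absurd (e1.symm.trans e2) hbc
              · exact absurd (e2.symm.trans e1) hbc
            · intro hcon; exact absurd hcon hnd_old
          · simp [hi]
        have hdfc2 : dfc x (fun m => if m = l then x l else y m) < dfc x y := by
          apply card_lt_of _ _ l
          · intro i hi
            simp only [dfc, Finset.mem_filter, Finset.mem_univ, true_and] at hi ⊢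
            by_cases h2 : i = l
            · subst h2; simp at hi
            · simpa [h2] using hi
          · simp only [Finset.mem_filter, Finset.mem_univ, true_and]; exact hne
          · simp
        have hμ2 : (k+1) * dfd b c x (fun m => if m = l then x l else y m)
            + dfc x (fun m => if m = l then x l else y m) ≤ N := by
          rw [hdfd2]
          have h1 := dfc_le_k x (fun m => if m = l then x l else y m)
          linarith only [hμ, hdfc2, h1]
        have IH2 := IH x (fun m => if m = l then x l else y m) hμ2
        have e21 : (fun i => f (x i) (if i = l then x l else y i))
            = (fun i => f (x i) (y i)) := by
          funext i
          by_cases hi : i = l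
          · subst hi; simp [fxx, hfmeet _ _ hle]
          · simp [hi]
        have e22 : (fun i => g (x i) (if i = l then x l else y i))
            = (fun i => if i = l then x l else g (x i) (y i)) := by
          funext i
          by_cases hi : i = l
          · subst hi; simp [gxx]
          · simp [hi]
        rw [e21, e22] at IH2
        have hwle : ∀ m, y m ≤ (fun i => g (x i) (y i)) m := by
          intro m
          show y m ≤ g (x m) (y m)
          rcases classify x y m with he | hc1 | hc2 | ⟨⟨e1, e2⟩ | ⟨e1, e2⟩⟩
          · rw [← he, gxx]
          · rw [hgjoin _ _ hc1]
          · rw [gge _ _ hc2]; exact hc2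
          · rw [e1, e2]; exact hγac
          · rw [e1, e2, hgcb]; exact hγab
        have hw'l : y l = (fun i => g (x i) (y i)) l := by
          show y l = g (x l) (y l)
          exact (hgjoin _ _ hle).symm
        have hpl : x l ≤ (fun i => g (x i) (y i)) l := by
          show x l ≤ g (x l) (y l)
          rw [hgjoin _ _ hle]; exact hle
        have EXi := ex2core f g h hfcomm hgcomm hfmeet hgjoin HB
          (dfc (fun i => g (x i) (y i)) y)
          (fun i => g (x i) (y i)) y l (x l) hwle hw'l hpl le_rfl
        linarith only [IH2, EXi]
    -- Route for two defect coordinates l ≠ j, with x l = b, y l = c.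
    have route3 : ∀ (x y : Fin k → D) (l j : Fin k), l ≠ j → x l = b → y l = c →
        ((x j = b ∧ y j = c) ∨ (x j = c ∧ y j = b)) →
        (∀ m, x m ≠ y m → (x m = b ∧ y m = c) ∨ (x m = c ∧ y m = b)) →
        (k+1) * dfd b c x y + dfc x y ≤ N + 1 →
        h (fun i => f (x i) (y i)) + h (fun i => g (x i) (y i)) ≤ h x + h y := by
      intro x y l j hlj hxl hyl hdefj halldef hμ
      have huj : f (x j) (y j) = f b c := by
        rcases hdefj with ⟨e1, e2⟩ | ⟨e1, e2⟩
        · rw [e1, e2]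
        · rw [e1, e2, hfcb]
      have hvj : g (x j) (y j) = g b c := by
        rcases hdefj with ⟨e1, e2⟩ | ⟨e1, e2⟩
        · rw [e1, e2]
        · rw [e1, e2, hgcb]
      have hul : f (x l) (y l) = f b c := by rw [hxl, hyl]
      have hvl : g (x l) (y l) = g b c := by rw [hxl, hyl]
      have hyj : y j = c ∨ y j = b := by
        rcases hdefj with ⟨e1, e2⟩ | ⟨e1, e2⟩
        · exact Or.inl e2
        · exact Or.inr e2
      have hxjbc : x j = b ∨ x j = c := by
        rcases hdefj with ⟨e1, e2⟩ | ⟨e1, e2⟩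
        · exact Or.inl e1
        · exact Or.inr e1
      have hbg : ∀ m, (f (x m) (y m) = x m ∧ g (x m) (y m) = x m ∧ x m = y m)
          ∨ (f (x m) (y m) = f b c ∧ g (x m) (y m) = g b c ∧ (x m = b ∨ x m = c)) := by
        intro m
        by_cases he : x m = y m
        · exact Or.inl ⟨by rw [← he, fxx], by rw [← he, gxx], he⟩
        · right
          rcases halldef m he with ⟨e1, e2⟩ | ⟨e1, e2⟩
          · exact ⟨by rw [e1, e2], by rw [e1, e2], Or.inl e1⟩
          · exact ⟨by rw [e1, e2, hfcb], by rw [e1, e2, hgcb], Or.inr e1⟩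
      -- membership facts for measures
      have hmem_l : l ∈ Finset.univ.filter
          (fun i => (x i = b ∧ y i = c) ∨ (x i = c ∧ y i = b)) := by
        simp only [Finset.mem_filter, Finset.mem_univ, true_and]
        exact Or.inl ⟨hxl, hyl⟩
      have hmem_j : j ∈ Finset.univ.filter
          (fun i => (x i = b ∧ y i = c) ∨ (x i = c ∧ y i = b)) := by
        simp only [Finset.mem_filter, Finset.mem_univ, true_and]
        exact hdefj
      have h2le : 2 ≤ dfd b c x y := by
        have hsub : ({l, j} : Finset (Fin k)) ⊆ Finset.univ.filter
            (fun i => (x i = b ∧ y i = c) ∨ (x i = c ∧ y i = b)) := by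
          intro i hi
          rcases Finset.mem_insert.mp hi with e | e
          · subst e; exact hmem_l
          · rw [Finset.mem_singleton] at e; subst e; exact hmem_j
        have := Finset.card_le_card hsub
        rwa [Finset.card_pair hlj] at this
      have h1le : 1 ≤ dfd b c x y := by omega
      -- R1 : IH on (x[j := y j], y)
      have hdfdR1 : dfd b c (fun m => if m = j then y j else x m) y < dfd b c x y := by
        apply card_lt_of _ _ j
        · intro i hi
          simp only [Finset.mem_filter, Finset.mem_univ, true_and] at hi ⊢
          by_cases h2 : i = j
          · subst h2
            rw [if_pos rfl] at hi
            exfalso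
            rcases hi with ⟨e1, e2⟩ | ⟨e1, e2⟩
            · exact hbc (e1.symm.trans e2)
            · exact hbc (e2.symm.trans e1)
          · rwa [if_neg h2] at hi
        · exact hmem_j
        · simp only [Finset.mem_filter, Finset.mem_univ, true_and, if_pos rfl]
          rintro (⟨e1, e2⟩ | ⟨e1, e2⟩)
          · exact hbc (e1.symm.trans e2)
          · exact hbc (e2.symm.trans e1)
      have hμR1 : (k+1) * dfd b c (fun m => if m = j then y j else x m) y
          + dfc (fun m => if m = j then y j else x m) y ≤ N := by
        have h1 := dfc_le_k (fun m => if m = j then y j else x m) y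
        have h2 : dfd b c (fun m => if m = j then y j else x m) y + 1 ≤ dfd b c x y := hdfdR1
        have h3 := Nat.mul_le_mul_left (k+1) h2
        have h4 : (k+1) * (dfd b c (fun m => if m = j then y j else x m) y + 1)
            = (k+1) * dfd b c (fun m => if m = j then y j else x m) y + (k+1) := by ring
        linarith only [hμ, h1, h3, h4]
      have R1 := IH (fun m => if m = j then y j else x m) y hμR1
      have eR1f : (fun i => f (if i = j then y j else x i) (y i))
          = (fun m => if m = j then y j else f (x m) (y m)) := by
        funext i
        by_cases hi : i = j
        · subst hi; simp [fxx]
        · simp [hi]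
      have eR1g : (fun i => g (if i = j then y j else x i) (y i))
          = (fun m => if m = j then y j else g (x m) (y m)) := by
        funext i
        by_cases hi : i = j
        · subst hi; simp [gxx]
        · simp [hi]
      rw [eR1f, eR1g] at R1
      -- E1 : binary instance on background u = (fun i => f (x i) (y i))
      have E1 : h (fun i => f (x i) (y i))
          + h (fun m => if m = l then b else if m = j then y j else f (x m) (y m))
          ≤ h (fun m => if m = l then b else f (x m) (y m))
          + h (fun m => if m = j then y j else f (x m) (y m)) := by
        have HBi := HB l j hlj (fun i => f (x i) (y i)) b (f b c) (f b c) (y j)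
        try dsimp only at HBi
        have e3 : (fun m => if m = l then b else if m = j then f b c else f (x m) (y m))
            = (fun m => if m = l then b else f (x m) (y m)) := by
          funext m
          by_cases h1 : m = l
          · simp [h1]
          · by_cases h2 : m = j
            · subst h2; simp [h1, huj]
            · simp [h1, h2]
        have e4 : (fun m => if m = l then f b c else if m = j then y j else f (x m) (y m))
            = (fun m => if m = j then y j else f (x m) (y m)) := by
          funext m
          by_cases h1 : m = l
          · subst h1; simp [hlj, hul]
          · simp [h1]
        rw [e3, e4] at HBi
        rcases hβpos with hββ | hββ
        · have ef1 : f b (f b c) = f b c := fge b (f b c) hββ.1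
          have ef2 : f (f b c) (y j) = f b c := by
            rcases hyj with e | e
            · rw [e]; exact hfmeet _ _ hββ.2
            · rw [e]; exact hfmeet _ _ hββ.1
          have eg1 : g b (f b c) = b := gge b (f b c) hββ.1
          have eg2 : g (f b c) (y j) = y j := by
            rcases hyj with e | e
            · rw [e]; exact hgjoin _ _ hββ.2
            · rw [e]; exact hgjoin _ _ hββ.1
          rw [ef1, ef2, eg1, eg2] at HBi
          have e5 : (fun m => if m = l then f b c else if m = j then f b c else f (x m) (y m))
              = (fun i => f (x i) (y i)) := by
            funext m
            by_cases h1 : m = l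
            · subst h1; simp [hul]
            · by_cases h2 : m = j
              · subst h2; simp [h1, huj]
              · simp [h1, h2]
          rw [e5] at HBi
          linarith only [HBi]
        · have ef1 : f b (f b c) = b := hfmeet b (f b c) hββ.1
          have ef2 : f (f b c) (y j) = y j := by
            rcases hyj with e | e
            · rw [e]; exact fge _ _ hββ.2
            · rw [e]; exact fge _ _ hββ.1
          have eg1 : g b (f b c) = f b c := hgjoin b (f b c) hββ.1
          have eg2 : g (f b c) (y j) = f b c := by
            rcases hyj with e | e
            · rw [e]; exact gge _ _ hββ.2
            · rw [e]; exact gge _ _ hββ.1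
          rw [ef1, ef2, eg1, eg2] at HBi
          have e5 : (fun m => if m = l then f b c else if m = j then f b c else f (x m) (y m))
              = (fun i => f (x i) (y i)) := by
            funext m
            by_cases h1 : m = l
            · subst h1; simp [hul]
            · by_cases h2 : m = j
              · subst h2; simp [h1, huj]
              · simp [h1, h2]
          rw [e5] at HBi
          linarith only [HBi]
      -- E2 : binary instance on background v
      have E2 : h (fun i => g (x i) (y i))
          + h (fun m => if m = l then b else if m = j then y j else g (x m) (y m))
          ≤ h (fun m => if m = l then b else g (x m) (y m))
          + h (fun m => if m = j then y j else g (x m) (y m)) := by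
        have HBi := HB l j hlj (fun i => g (x i) (y i)) b (g b c) (g b c) (y j)
        try dsimp only at HBi
        have e3 : (fun m => if m = l then b else if m = j then g b c else g (x m) (y m))
            = (fun m => if m = l then b else g (x m) (y m)) := by
          funext m
          by_cases h1 : m = l
          · simp [h1]
          · by_cases h2 : m = j
            · subst h2; simp [h1, hvj]
            · simp [h1, h2]
        have e4 : (fun m => if m = l then g b c else if m = j then y j else g (x m) (y m))
            = (fun m => if m = j then y j else g (x m) (y m)) := by
          funext m
          by_cases h1 : m = l
          · subst h1; simp [hlj, hvl]
          · simp [h1]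
        rw [e3, e4] at HBi
        have e5 : (fun m => if m = l then g b c else if m = j then g b c else g (x m) (y m))
            = (fun i => g (x i) (y i)) := by
          funext m
          by_cases h1 : m = l
          · subst h1; simp [hvl]
          · by_cases h2 : m = j
            · subst h2; simp [h1, hvj]
            · simp [h1, h2]
        rcases hγpos with hγγ | hγγ
        · have ef1 : f b (g b c) = g b c := fge b (g b c) hγγ.1
          have ef2 : f (g b c) (y j) = g b c := by
            rcases hyj with e | e
            · rw [e]; exact hfmeet _ _ hγγ.2
            · rw [e]; exact hfmeet _ _ hγγ.1
          have eg1 : g b (g b c) = b := gge b (g b c) hγγ.1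
          have eg2 : g (g b c) (y j) = y j := by
            rcases hyj with e | e
            · rw [e]; exact hgjoin _ _ hγγ.2
            · rw [e]; exact hgjoin _ _ hγγ.1
          rw [ef1, ef2, eg1, eg2, e5] at HBi
          linarith only [HBi]
        · have ef1 : f b (g b c) = b := hfmeet b (g b c) hγγ.1
          have ef2 : f (g b c) (y j) = y j := by
            rcases hyj with e | e
            · rw [e]; exact fge _ _ hγγ.2
            · rw [e]; exact fge _ _ hγγ.1
          have eg1 : g b (g b c) = g b c := hgjoin b (g b c) hγγ.1
          have eg2 : g (g b c) (y j) = g b c := by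
            rcases hyj with e | e
            · rw [e]; exact gge _ _ hγγ.2
            · rw [e]; exact gge _ _ hγγ.1
          rw [ef1, ef2, eg1, eg2, e5] at HBi
          linarith only [HBi]
      -- measure bounds
      have boundA : ∀ P Q : Fin k → D, dfd b c P Q ≤ 1 →
          (k+1) * dfd b c P Q + dfc P Q ≤ N := by
        intro P Q h1
        have h2 := dfc_le_k P Q
        have h3 : (k+1) * dfd b c P Q ≤ (k+1) * 1 := Nat.mul_le_mul_left _ h1
        have h4 : (k+1) * 2 ≤ (k+1) * dfd b c x y := Nat.mul_le_mul_left _ h2le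
        have h5 : (k+1) * 1 = k + 1 := by ring
        have h6 : (k+1) * 2 = 2*k + 2 := by ring
        linarith only [hμ, h2, h3, h4, h5, h6]
      have bound0 : ∀ P Q : Fin k → D, dfd b c P Q = 0 →
          (k+1) * dfd b c P Q + dfc P Q ≤ N := by
        intro P Q h0
        have h2 := dfc_le_k P Q
        have h4 : (k+1) * 1 ≤ (k+1) * dfd b c x y := Nat.mul_le_mul_left _ h1le
        have h5 : (k+1) * 1 = k + 1 := by ring
        rw [h0]
        have h6 : (k+1) * 0 = 0 := by ring
        linarith only [hμ, h2, h4, h5, h6]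
      rcases hγpos with hγγ | hγγ
      · -- route a : γ (hence β) below b and c
        have hββa : f b c ≤ b ∧ f b c ≤ c := ⟨le_trans hfg.le hγγ.1, le_trans hfg.le hγγ.2⟩
        have hdfdA : dfd b c x (fun m => if m = l then b else if m = j then y j else f (x m) (y m)) ≤ 1 := by
          unfold dfd
          refine le_trans (Finset.card_le_card ?_) (by simp : ({j} : Finset (Fin k)).card ≤ 1)
          intro i hi
          simp only [Finset.mem_filter, Finset.mem_univ, true_and] at hi
          simp only [Finset.mem_singleton]
          by_contra hij
          by_cases hil : i = l
          · subst hil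
            rw [if_pos rfl] at hi
            rcases hi with ⟨p1, p2⟩ | ⟨p1, p2⟩
            · exact hbc p2
            · exact hbc (hxl.symm.trans p1)
          · rw [if_neg hil, if_neg hij] at hi
            rcases hbg i with ⟨e1, e2, e3⟩ | ⟨e1, e2, e3⟩
            · rw [e1] at hi
              rcases hi with ⟨p1, p2⟩ | ⟨p1, p2⟩
              · exact hbc (p1.symm.trans p2)
              · exact hbc (p2.symm.trans p1)
            · rw [e1] at hi
              rcases hi with ⟨p1, p2⟩ | ⟨p1, p2⟩
              · exact hβc p2
              · exact hβb p2
        have I2a0 := IH x (fun m => if m = l then b else if m = j then y j else f (x m) (y m))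
          (boundA _ _ hdfdA)
        try dsimp only at I2a0
        have eA1 : (fun i => f (x i) (if i = l then b else if i = j then y j else f (x i) (y i)))
            = (fun m => if m = l then b else f (x m) (y m)) := by
          funext i
          by_cases hil : i = l
          · subst hil; simp [hxl, fxx]
          · by_cases hij : i = j
            · subst hij; simp [hil]
            · simp only [if_neg hil, if_neg hij]
              rcases hbg i with ⟨e1, e2, e3⟩ | ⟨e1, e2, e3⟩
              · rw [e1, fxx]
              · rw [e1]
                rcases e3 with e | e
                · rw [e]; exact fge _ _ hββa.1
                · rw [e]; exact fge _ _ hββa.2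
        have eA2 : (fun i => g (x i) (if i = l then b else if i = j then y j else f (x i) (y i)))
            = (fun m => if m = j then g b c else x m) := by
          funext i
          by_cases hil : i = l
          · subst hil; simp [hlj, hxl, gxx]
          · by_cases hij : i = j
            · subst hij; simp [hil, hvj]
            · simp only [if_neg hil, if_neg hij]
              rcases hbg i with ⟨e1, e2, e3⟩ | ⟨e1, e2, e3⟩
              · rw [e1, gxx]
              · rw [e1]
                rcases e3 with e | e
                · rw [e]; exact gge _ _ hββa.1
                · rw [e]; exact gge _ _ hββa.2
        rw [eA1, eA2] at I2a0
        have hdfd0a : dfd b c (fun m => if m = l then b else if m = j then y j else g (x m) (y m))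
            (fun m => if m = j then g b c else x m) = 0 := by
          unfold dfd
          rw [Finset.card_eq_zero]
          rw [Finset.eq_empty_iff_forall_notMem]
          intro i hi
          simp only [Finset.mem_filter, Finset.mem_univ, true_and] at hi
          by_cases hil : i = l
          · subst hil
            rw [if_pos rfl, if_neg hlj] at hi
            rcases hi with ⟨p1, p2⟩ | ⟨p1, p2⟩
            · exact hbc (hxl.symm.trans p2)
            · exact hbc p1
          · by_cases hij : i = j
            · subst hij
              rw [if_neg hil, if_pos rfl, if_pos rfl] at hi
              rcases hi with ⟨p1, p2⟩ | ⟨p1, p2⟩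
              · exact hγc p2
              · exact hγb p2
            · rw [if_neg hil, if_neg hij, if_neg hij] at hi
              rcases hbg i with ⟨e1, e2, e3⟩ | ⟨e1, e2, e3⟩
              · rw [e2] at hi
                rcases hi with ⟨p1, p2⟩ | ⟨p1, p2⟩
                · exact hbc (p1.symm.trans p2)
                · exact hbc (p2.symm.trans p1)
              · rw [e2] at hi
                rcases hi with ⟨p1, p2⟩ | ⟨p1, p2⟩
                · exact hγb p1
                · exact hγc p1
        have I3a0 := IH (fun m => if m = l then b else if m = j then y j else g (x m) (y m))
          (fun m => if m = j then g b c else x m) (bound0 _ _ hdfd0a)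
        try dsimp only at I3a0
        have eA3 : (fun i => f (if i = l then b else if i = j then y j else g (x i) (y i))
              (if i = j then g b c else x i))
            = (fun m => if m = l then b else g (x m) (y m)) := by
          funext i
          by_cases hil : i = l
          · subst hil; simp [hlj, hxl, fxx]
          · by_cases hij : i = j
            · subst hij
              simp only [if_neg hil, if_pos rfl]
              rw [hvj]
              rcases hyj with e | e
              · rw [e]; exact fge _ _ hγγ.2
              · rw [e]; exact fge _ _ hγγ.1
            · simp only [if_neg hil, if_neg hij]
              rcases hbg i with ⟨e1, e2, e3⟩ | ⟨e1, e2, e3⟩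
              · rw [e2, fxx]
              · rw [e2]
                rcases e3 with e | e
                · rw [e]; exact hfmeet _ _ hγγ.1
                · rw [e]; exact hfmeet _ _ hγγ.2
        have eA4 : (fun i => g (if i = l then b else if i = j then y j else g (x i) (y i))
              (if i = j then g b c else x i))
            = (fun m => if m = j then y j else x m) := by
          funext i
          by_cases hil : i = l
          · subst hil; simp [hlj, hxl, gxx]
          · by_cases hij : i = j
            · subst hij
              simp only [if_neg hil, if_pos rfl]
              rcases hyj with e | e
              · rw [e]; exact gge _ _ hγγ.2
              · rw [e]; exact gge _ _ hγγ.1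
            · simp only [if_neg hil, if_neg hij]
              rcases hbg i with ⟨e1, e2, e3⟩ | ⟨e1, e2, e3⟩
              · rw [e2, gxx]
              · rw [e2]
                rcases e3 with e | e
                · rw [e]; exact hgjoin _ _ hγγ.1
                · rw [e]; exact hgjoin _ _ hγγ.2
        rw [eA3, eA4] at I3a0
        linarith only [R1, E1, E2, I2a0, I3a0]
      · -- route b : γ above b and c
        have hdfdB : dfd b c x (fun m => if m = l then b else if m = j then y j else g (x m) (y m)) ≤ 1 := by
          unfold dfd
          refine le_trans (Finset.card_le_card ?_) (by simp : ({j} : Finset (Fin k)).card ≤ 1)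
          intro i hi
          simp only [Finset.mem_filter, Finset.mem_univ, true_and] at hi
          simp only [Finset.mem_singleton]
          by_contra hij
          by_cases hil : i = l
          · subst hil
            rw [if_pos rfl] at hi
            rcases hi with ⟨p1, p2⟩ | ⟨p1, p2⟩
            · exact hbc p2
            · exact hbc (hxl.symm.trans p1)
          · rw [if_neg hil, if_neg hij] at hi
            rcases hbg i with ⟨e1, e2, e3⟩ | ⟨e1, e2, e3⟩
            · rw [e2] at hi
              rcases hi with ⟨p1, p2⟩ | ⟨p1, p2⟩
              · exact hbc (p1.symm.trans p2)
              · exact hbc (p2.symm.trans p1)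
            · rw [e2] at hi
              rcases hi with ⟨p1, p2⟩ | ⟨p1, p2⟩
              · exact hγc p2
              · exact hγb p2
        have I2b0 := IH x (fun m => if m = l then b else if m = j then y j else g (x m) (y m))
          (boundA _ _ hdfdB)
        try dsimp only at I2b0
        have eB1 : (fun i => f (x i) (if i = l then b else if i = j then y j else g (x i) (y i)))
            = (fun m => if m = j then f b c else x m) := by
          funext i
          by_cases hil : i = l
          · subst hil; simp [hlj, hxl, fxx]
          · by_cases hij : i = j
            · subst hij; simp [hil, huj]
            · simp only [if_neg hil, if_neg hij]
              rcases hbg i with ⟨e1, e2, e3⟩ | ⟨e1, e2, e3⟩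
              · rw [e2, fxx]
              · rw [e2]
                rcases e3 with e | e
                · rw [e]; exact hfmeet _ _ hγγ.1
                · rw [e]; exact hfmeet _ _ hγγ.2
        have eB2 : (fun i => g (x i) (if i = l then b else if i = j then y j else g (x i) (y i)))
            = (fun m => if m = l then b else g (x m) (y m)) := by
          funext i
          by_cases hil : i = l
          · subst hil; simp [hxl, gxx]
          · by_cases hij : i = j
            · subst hij; simp [hil]
            · simp only [if_neg hil, if_neg hij]
              rcases hbg i with ⟨e1, e2, e3⟩ | ⟨e1, e2, e3⟩
              · rw [e2, gxx]
              · rw [e2]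
                rcases e3 with e | e
                · rw [e]; exact hgjoin _ _ hγγ.1
                · rw [e]; exact hgjoin _ _ hγγ.2
        rw [eB1, eB2] at I2b0
        have hdfd0b : dfd b c (fun m => if m = l then b else if m = j then y j else f (x m) (y m))
            (fun m => if m = j then f b c else x m) = 0 := by
          unfold dfd
          rw [Finset.card_eq_zero]
          rw [Finset.eq_empty_iff_forall_notMem]
          intro i hi
          simp only [Finset.mem_filter, Finset.mem_univ, true_and] at hi
          by_cases hil : i = l
          · subst hil
            rw [if_pos rfl, if_neg hlj] at hi
            rcases hi with ⟨p1, p2⟩ | ⟨p1, p2⟩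
            · exact hbc (hxl.symm.trans p2)
            · exact hbc p1
          · by_cases hij : i = j
            · subst hij
              rw [if_neg hil, if_pos rfl, if_pos rfl] at hi
              rcases hi with ⟨p1, p2⟩ | ⟨p1, p2⟩
              · exact hβc p2
              · exact hβb p2
            · rw [if_neg hil, if_neg hij, if_neg hij] at hi
              rcases hbg i with ⟨e1, e2, e3⟩ | ⟨e1, e2, e3⟩
              · rw [e1] at hi
                rcases hi with ⟨p1, p2⟩ | ⟨p1, p2⟩
                · exact hbc (p1.symm.trans p2)
                · exact hbc (p2.symm.trans p1)
              · rw [e1] at hi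
                rcases hi with ⟨p1, p2⟩ | ⟨p1, p2⟩
                · exact hβb p1
                · exact hβc p1
        have I3b0 := IH (fun m => if m = l then b else if m = j then y j else f (x m) (y m))
          (fun m => if m = j then f b c else x m) (bound0 _ _ hdfd0b)
        try dsimp only at I3b0
        rcases hβpos with hββ | hββ
        · -- β below
          have eB3 : (fun i => f (if i = l then b else if i = j then y j else f (x i) (y i))
                (if i = j then f b c else x i))
              = (fun m => if m = l then b else f (x m) (y m)) := by
            funext i
            by_cases hil : i = l
            · subst hil; simp [hlj, hxl, fxx]
            · by_cases hij : i = j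
              · subst hij
                simp only [if_neg hil, if_pos rfl]
                rw [huj]
                rcases hyj with e | e
                · rw [e]; exact fge _ _ hββ.2
                · rw [e]; exact fge _ _ hββ.1
              · simp only [if_neg hil, if_neg hij]
                rcases hbg i with ⟨e1, e2, e3⟩ | ⟨e1, e2, e3⟩
                · rw [e1, fxx]
                · rw [e1]
                  rcases e3 with e | e
                  · rw [e]; exact hfmeet _ _ hββ.1
                  · rw [e]; exact hfmeet _ _ hββ.2
          have eB4 : (fun i => g (if i = l then b else if i = j then y j else f (x i) (y i))
                (if i = j then f b c else x i))
              = (fun m => if m = j then y j else x m) := by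
            funext i
            by_cases hil : i = l
            · subst hil; simp [hlj, hxl, gxx]
            · by_cases hij : i = j
              · subst hij
                simp only [if_neg hil, if_pos rfl]
                rcases hyj with e | e
                · rw [e]; exact gge _ _ hββ.2
                · rw [e]; exact gge _ _ hββ.1
              · simp only [if_neg hil, if_neg hij]
                rcases hbg i with ⟨e1, e2, e3⟩ | ⟨e1, e2, e3⟩
                · rw [e1, gxx]
                · rw [e1]
                  rcases e3 with e | e
                  · rw [e]; exact hgjoin _ _ hββ.1
                  · rw [e]; exact hgjoin _ _ hββ.2
          rw [eB3, eB4] at I3b0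
          linarith only [R1, E1, E2, I2b0, I3b0]
        · -- β above
          have eB3 : (fun i => f (if i = l then b else if i = j then y j else f (x i) (y i))
                (if i = j then f b c else x i))
              = (fun m => if m = j then y j else x m) := by
            funext i
            by_cases hil : i = l
            · subst hil; simp [hlj, hxl, fxx]
            · by_cases hij : i = j
              · subst hij
                simp only [if_neg hil, if_pos rfl]
                rcases hyj with e | e
                · rw [e]; exact hfmeet _ _ hββ.2
                · rw [e]; exact hfmeet _ _ hββ.1
              · simp only [if_neg hil, if_neg hij]
                rcases hbg i with ⟨e1, e2, e3⟩ | ⟨e1, e2, e3⟩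
                · rw [e1, fxx]
                · rw [e1]
                  rcases e3 with e | e
                  · rw [e]; exact fge _ _ hββ.1
                  · rw [e]; exact fge _ _ hββ.2
          have eB4 : (fun i => g (if i = l then b else if i = j then y j else f (x i) (y i))
                (if i = j then f b c else x i))
              = (fun m => if m = l then b else f (x m) (y m)) := by
            funext i
            by_cases hil : i = l
            · subst hil; simp [hlj, hxl, gxx]
            · by_cases hij : i = j
              · subst hij
                simp only [if_neg hil, if_pos rfl]
                rw [huj]
                rcases hyj with e | e
                · rw [e]; exact hgjoin _ _ hββ.2
                · rw [e]; exact hgjoin _ _ hββ.1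
              · simp only [if_neg hil, if_neg hij]
                rcases hbg i with ⟨e1, e2, e3⟩ | ⟨e1, e2, e3⟩
                · rw [e1, gxx]
                · rw [e1]
                  rcases e3 with e | e
                  · rw [e]; exact gge _ _ hββ.1
                  · rw [e]; exact gge _ _ hββ.2
          rw [eB3, eB4] at I3b0
          linarith only [R1, E1, E2, I2b0, I3b0]


    -- dispatch
    intro x y hμ
    by_cases hxy : ∀ i, x i = y i
    · exact trivcase x y hxy
    · push_neg at hxy
      obtain ⟨l0, hl0⟩ := hxy
      by_cases hcd : ∃ l, x l ≠ y l ∧ (x l ≤ y l ∨ y l ≤ x l)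
      · obtain ⟨l, hne, hcl⟩ := hcd
        rcases hcl with hle | hle
        · exact route12 x y l hle hne hμ
        · apply swap x y
          exact route12 y x l hle (Ne.symm hne)
            (by rw [dfd_symm b c y x, dfc_symm y x]; exact hμ)
      · push_neg at hcd
        have halldef : ∀ m, x m ≠ y m → (x m = b ∧ y m = c) ∨ (x m = c ∧ y m = b) := by
          intro m hm
          by_contra hcon
          rcases hcomp (x m) (y m) hcon with hh | hh
          · exact (hcd m hm).1 hh
          · exact (hcd m hm).2 hh
        by_cases huniq : ∀ m, m ≠ l0 → x m = y m
        · -- single differing coordinate : direct binary instance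
          obtain ⟨j, hj⟩ := exists_ne l0
          have HBi := HB l0 j (Ne.symm hj) x (x l0) (x j) (y l0) (x j)
          have e1 : (fun m => if m = l0 then f (x l0) (y l0) else if m = j then f (x j) (x j) else x m)
              = (fun i => f (x i) (y i)) := by
            funext m
            by_cases h1 : m = l0
            · simp [h1]
            · by_cases h2 : m = j
              · subst h2
                rw [if_neg h1, if_pos rfl, huniq _ h1]
              · rw [if_neg h1, if_neg h2, ← huniq m h1, fxx]
          have e2 : (fun m => if m = l0 then g (x l0) (y l0) else if m = j then g (x j) (x j) else x m)
              = (fun i => g (x i) (y i)) := by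
            funext m
            by_cases h1 : m = l0
            · simp [h1]
            · by_cases h2 : m = j
              · subst h2
                rw [if_neg h1, if_pos rfl, huniq _ h1]
              · rw [if_neg h1, if_neg h2, ← huniq m h1, gxx]
          have e3 : (fun m => if m = l0 then x l0 else if m = j then x j else x m) = x := by
            funext m
            by_cases h1 : m = l0
            · simp [h1]
            · by_cases h2 : m = j
              · subst h2; rw [if_neg h1, if_pos rfl]
              · rw [if_neg h1, if_neg h2]
          have e4 : (fun m => if m = l0 then y l0 else if m = j then x j else x m) = y := by
            funext m
            by_cases h1 : m = l0
            · simp [h1]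
            · by_cases h2 : m = j
              · subst h2; rw [if_neg h1, if_pos rfl, huniq _ h1]
              · rw [if_neg h1, if_neg h2, huniq m h1]
          rw [e1, e2, e3, e4] at HBi
          exact HBi
        · push_neg at huniq
          obtain ⟨j0, hj0ne, hj0⟩ := huniq
          rcases halldef l0 hl0 with ⟨hb1, hc1⟩ | ⟨hb1, hc1⟩
          · exact route3 x y l0 j0 (Ne.symm hj0ne) hb1 hc1 (halldef j0 hj0) halldef hμ
          · apply swap x y
            have halldef' : ∀ m, y m ≠ x m → (y m = b ∧ x m = c) ∨ (y m = c ∧ x m = b) := by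
              intro m hm
              rcases halldef m (Ne.symm hm) with ⟨p1, p2⟩ | ⟨p1, p2⟩
              · exact Or.inr ⟨p2, p1⟩
              · exact Or.inl ⟨p2, p1⟩
            exact route3 y x l0 j0 (Ne.symm hj0ne) hc1 hb1
              (halldef' j0 (Ne.symm hj0)) halldef'
              (by rw [dfd_symm b c y x, dfc_symm y x]; exact hμ)



/-- For a 1-defect chain `(D; f, g)` with defect `{b,c}`, a function
`h : D^k → ℤ` (k ≥ 2) has the multimorphism `(f,g)` iff every binary function
obtained from `h` by fixing any `k-2` arguments to constants has the
multimorphism `(f,g)`. -/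
theorem stmt5 {D : Type*} [Fintype D] [DecidableEq D] [PartialOrder D]
    (b c : D) (hbc : b ≠ c) (hbc1 : ¬ b ≤ c) (hbc2 : ¬ c ≤ b)
    (hcomp : ∀ x y : D, ¬ ((x = b ∧ y = c) ∨ (x = c ∧ y = b)) → x ≤ y ∨ y ≤ x)
    (f g : D → D → D)
    (hfcomm : ∀ x y, f x y = f y x) (hgcomm : ∀ x y, g x y = g y x)
    (hfmeet : ∀ x y, x ≤ y → f x y = x) (hgjoin : ∀ x y, x ≤ y → g x y = y)
    (hfdef : f b c ∉ ({b, c} : Set D)) (hgdef : g b c ∉ ({b, c} : Set D))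
    (hfg : f b c < g b c)
    {k : ℕ} (hk : 2 ≤ k) (h : (Fin k → D) → ℤ) :
    (∀ x y : Fin k → D,
        h (fun i => f (x i) (y i)) + h (fun i => g (x i) (y i)) ≤ h x + h y) ↔
    (∀ i j : Fin k, i ≠ j → ∀ z : Fin k → D,
      ∀ s t s' t' : D,
        (fun (p q : D) => h (fun m => if m = i then p else if m = j then q else z m))
            (f s s') (f t t') +
        (fun (p q : D) => h (fun m => if m = i then p else if m = j then q else z m))
            (g s s') (g t t') ≤
        (fun (p q : D) => h (fun m => if m = i then p else if m = j then q else z m)) s t +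
        (fun (p q : D) => h (fun m => if m = i then p else if m = j then q else z m)) s' t') := by
  have fxx : ∀ a : D, f a a = a := fun a => hfmeet a a le_rfl
  have gxx : ∀ a : D, g a a = a := fun a => hgjoin a a le_rfl
  constructor
  · intro H i j hij z s t s' t'
    have HX := H (fun m => if m = i then s else if m = j then t else z m)
      (fun m => if m = i then s' else if m = j then t' else z m)
    try dsimp only at HX
    have e1 : (fun m => f (if m = i then s else if m = j then t else z m)
          (if m = i then s' else if m = j then t' else z m))
        = (fun m => if m = i then f s s' else if m = j then f t t' else z m) := by
      funext m
      by_cases h1 : m = i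
      · simp [h1]
      · by_cases h2 : m = j
        · simp [h1, h2, Ne.symm hij]
        · simp [h1, h2, fxx]
    have e2 : (fun m => g (if m = i then s else if m = j then t else z m)
          (if m = i then s' else if m = j then t' else z m))
        = (fun m => if m = i then g s s' else if m = j then g t t' else z m) := by
      funext m
      by_cases h1 : m = i
      · simp [h1]
      · by_cases h2 : m = j
        · simp [h1, h2, Ne.symm hij]
        · simp [h1, h2, gxx]
    rw [e1, e2] at HX
    exact HX
  · intro H x y
    exact backward b c hbc hbc1 hbc2 hcomp f g hfcomm hgcomm hfmeet hgjoin hfdef hgdef hfg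
      hk h (fun i j hij z s t s' t' => H i j hij z s t s' t') x y
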